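/- Let G be a finite nilpotent group. Then Γ*(G) is a star graph — i.e., there exists a non-isolated vertex H of Γ(G) that is adjacent to every other non-isolated vertex, no two non-isolated vertices both different from H are adjacent, and there exists at least one non-isolated vertex different from H — if and only if either the order of G equals pq for distinct primes p and q, or G is a cyclic group of order p^r q for distinct primes p, q and some integer r ≥ 2. -/

import Mathlib

open scoped Pointwise

/-- Adjacency in the co-maximal subgroup graph `Γ(G)`: `H` and `K` are distinct
non-trivial proper subgroups of `G` with `HK = G` as a setwise product. -/
def comaxAdj {G : Type*} [Group G] (H K : Subgroup G) : Prop :=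
  H ≠ ⊥ ∧ H ≠ ⊤ ∧ K ≠ ⊥ ∧ K ≠ ⊤ ∧ H ≠ K ∧ (H : Set G) * (K : Set G) = Set.univ

open Subgroup

section CyclicToolkit
variable {G : Type*} [Group G] [Finite G]

/-- order of a generator is the card -/
lemma gen_orderOf {g : G} (hg : ∀ x, x ∈ zpowers g) : orderOf g = Nat.card G := by
  have : zpowers g = ⊤ := by ext x; simpa using hg x
  rw [← Nat.card_zpowers, this, Subgroup.card_top]

/-- the canonical subgroup of order d -/
lemma exists_subgroup_card_eq' [IsCyclic G] {d : ℕ} (hd : d ∣ Nat.card G) :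
    ∃ H : Subgroup G, Nat.card H = d ∧ ∀ x : G, x ^ d = 1 → x ∈ H := by
  obtain ⟨g, hg⟩ := IsCyclic.exists_generator (α := G)
  have hn : Nat.card G ≠ 0 := Nat.card_pos.ne'
  have horder := gen_orderOf hg
  refine ⟨zpowers (g ^ (Nat.card G / d)), ?_, ?_⟩
  · rw [Nat.card_zpowers, orderOf_pow, horder]
    have h1 : Nat.gcd (Nat.card G) (Nat.card G / d) = Nat.card G / d :=
      Nat.gcd_eq_right (Nat.div_dvd_of_dvd hd)
    rw [h1, Nat.div_div_self hd hn]
  · intro x hx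
    obtain ⟨k, hk⟩ := Subgroup.mem_zpowers_iff.mp (hg x)
    have hdvd : (orderOf g : ℤ) ∣ k * d := by
      rw [orderOf_dvd_iff_zpow_eq_one, zpow_mul, hk]
      norm_cast
    rw [horder] at hdvd
    have hd0 : (d : ℤ) ≠ 0 := by
      rintro h
      norm_cast at h
      subst h
      simp at hd
      exact hn hd
    have : ((Nat.card G / d : ℕ) : ℤ) ∣ k := by
      have hrw : (Nat.card G : ℤ) = ((Nat.card G / d : ℕ) : ℤ) * d := by
        norm_cast
        exact (Nat.div_mul_cancel hd).symm
      rw [hrw] at hdvd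
      exact (mul_dvd_mul_iff_right hd0).mp hdvd
    obtain ⟨m, hm⟩ := this
    rw [Subgroup.mem_zpowers_iff]
    refine ⟨m, ?_⟩
    rw [← zpow_natCast g, ← zpow_mul, ← hm, hk]

lemma mem_subgroup_pow_card {H : Subgroup G} {x : G} (hx : x ∈ H) : x ^ (Nat.card H) = 1 := by
  have : (⟨x, hx⟩ : H) ^ (Nat.card H) = 1 := pow_card_eq_one'
  exact_mod_cast congrArg (Subgroup.subtype H) this

/-- uniqueness: subgroups of a cyclic group are determined by their card -/
lemma cyclic_card_le_iff [IsCyclic G] {H K : Subgroup G} :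
    H ≤ K ↔ Nat.card H ∣ Nat.card K := by
  constructor
  · exact fun h => Subgroup.card_dvd_of_le h
  · intro h
    obtain ⟨L, hLcard, hLmem⟩ := exists_subgroup_card_eq' (d := Nat.card K)
      (Subgroup.card_subgroup_dvd_card K)
    have hKL : K ≤ L := fun x hx => hLmem x (mem_subgroup_pow_card hx)
    have hKLeq : K = L := Subgroup.eq_of_le_of_card_ge hKL (le_of_eq hLcard)
    rw [hKLeq]
    intro x hx
    exact hLmem x (by
      obtain ⟨c, hc⟩ := h
      have := mem_subgroup_pow_card hx
      rw [hc, pow_mul, this, one_pow])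

lemma cyclic_card_inj [IsCyclic G] {H K : Subgroup G}
    (h : Nat.card H = Nat.card K) : H = K :=
  le_antisymm (cyclic_card_le_iff.mpr (h ▸ dvd_rfl)) (cyclic_card_le_iff.mpr (h ▸ dvd_rfl))

end CyclicToolkit


section Adj
variable {G : Type*} [Group G] [Finite G]

omit [Finite G] in
lemma sup_eq_top_of_mul {H K : Subgroup G} (h : (H : Set G) * (K : Set G) = Set.univ) :
    H ⊔ K = ⊤ := by
  rw [eq_top_iff']
  intro x
  have hx : x ∈ (H : Set G) * (K : Set G) := by rw [h]; trivial
  obtain ⟨a, ha, b, hb, rfl⟩ := hx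
  exact mul_mem (Subgroup.mem_sup_left ha) (Subgroup.mem_sup_right hb)

omit [Finite G] in
lemma cyclic_normal [IsCyclic G] (K : Subgroup G) : K.Normal := by
  obtain ⟨g, hg⟩ := IsCyclic.exists_generator (α := G)
  have hcomm : ∀ a b : G, a * b = b * a := fun a b => by
    obtain ⟨i, hi⟩ := Subgroup.mem_zpowers_iff.mp (hg a)
    obtain ⟨j, hj⟩ := Subgroup.mem_zpowers_iff.mp (hg b)
    rw [← hi, ← hj, ← zpow_add, ← zpow_add, add_comm]
  exact ⟨fun k hk g' => by rw [hcomm g' k, mul_assoc, mul_inv_cancel, mul_one]; exact hk⟩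

lemma cyclic_card_sup [IsCyclic G] (H K : Subgroup G) :
    Nat.card ↥(H ⊔ K) = Nat.lcm (Nat.card H) (Nat.card K) := by
  refine Nat.dvd_antisymm ?_ (Nat.lcm_dvd (Subgroup.card_dvd_of_le le_sup_left)
    (Subgroup.card_dvd_of_le le_sup_right))
  obtain ⟨L, hLcard, -⟩ := exists_subgroup_card_eq'
    (d := Nat.lcm (Nat.card H) (Nat.card K))
    (Nat.lcm_dvd (Subgroup.card_subgroup_dvd_card H) (Subgroup.card_subgroup_dvd_card K))
  have h1 : H ⊔ K ≤ L := sup_le (cyclic_card_le_iff.mpr (hLcard ▸ Nat.dvd_lcm_left _ _))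
    (cyclic_card_le_iff.mpr (hLcard ▸ Nat.dvd_lcm_right _ _))
  exact hLcard ▸ Subgroup.card_dvd_of_le h1

lemma card_ne_top_iff {H : Subgroup G} : H ≠ ⊤ ↔ Nat.card H ≠ Nat.card G := by
  constructor
  · intro h hc
    exact h (Subgroup.eq_top_of_card_eq H hc)
  · intro h hc
    exact h (hc ▸ Subgroup.card_top)

lemma cyclic_comaxAdj_iff [IsCyclic G] {H K : Subgroup G} :
    comaxAdj H K ↔ (Nat.card H ≠ 1 ∧ Nat.card H ≠ Nat.card G ∧ Nat.card K ≠ 1 ∧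
      Nat.card K ≠ Nat.card G ∧ Nat.card H ≠ Nat.card K ∧
      Nat.lcm (Nat.card H) (Nat.card K) = Nat.card G) := by
  constructor
  · rintro ⟨h1, h2, h3, h4, h5, h6⟩
    refine ⟨fun h => h1 (Subgroup.card_eq_one.mp h), card_ne_top_iff.mp h2,
      fun h => h3 (Subgroup.card_eq_one.mp h), card_ne_top_iff.mp h4,
      fun h => h5 (cyclic_card_inj h), ?_⟩
    rw [← cyclic_card_sup, sup_eq_top_of_mul h6, Subgroup.card_top]
  · rintro ⟨h1, h2, h3, h4, h5, h6⟩
    have hsup : H ⊔ K = ⊤ := Subgroup.eq_top_of_card_eq (H ⊔ K) (by rw [cyclic_card_sup, h6])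
    haveI := cyclic_normal (G := G) K
    refine ⟨fun h => h1 (by rw [h]; simp), card_ne_top_iff.mpr h2,
      fun h => h3 (by rw [h]; simp), card_ne_top_iff.mpr h4,
      fun h => h5 (by rw [h]), ?_⟩
    rw [← Subgroup.mul_normal H K, hsup, Subgroup.coe_top]

end Adj

section Triangle
variable {G : Type*} [Group G] [Finite G] [Group.IsNilpotent G]

lemma exists_coatom_mem (h : ¬ IsCyclic G) (x : G) :
    ∃ M : Subgroup G, IsCoatom M ∧ x ∈ M := by
  have hne : Subgroup.zpowers x ≠ ⊤ := by
    intro htop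
    exact h ⟨⟨x, (Subgroup.eq_top_iff' _).mp htop⟩⟩
  rcases eq_top_or_exists_le_coatom (Subgroup.zpowers x) with h1 | ⟨M, hM, hle⟩
  · exact absurd h1 hne
  · exact ⟨M, hM, hle (Subgroup.mem_zpowers x)⟩

lemma coatom_sup_eq_top {M N : Subgroup G} (hM : IsCoatom M) (hN : IsCoatom N)
    (hne : M ≠ N) : M ⊔ N = ⊤ := by
  have h1 : ¬ N ≤ M := by
    intro hle
    exact hM.1 (hN.2 M (lt_of_le_of_ne hle hne.symm))
  exact hM.2 _ (lt_of_le_of_ne le_sup_left (fun h => h1 (h ▸ le_sup_right)))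

lemma coatom_comaxAdj {M N : Subgroup G} (hM : IsCoatom M) (hN : IsCoatom N)
    (hne : M ≠ N) (hMb : M ≠ ⊥) (hNb : N ≠ ⊥) : comaxAdj M N := by
  haveI : N.Normal := NormalizerCondition.normal_of_coatom N normalizerCondition_of_isNilpotent hN
  refine ⟨hMb, hM.1, hNb, hN.1, hne, ?_⟩
  rw [← Subgroup.mul_normal M N, coatom_sup_eq_top hM hN hne, Subgroup.coe_top]

lemma noncyclic_triangle (h : ¬ IsCyclic G) :
    ∃ M₁ M₂ M₃ : Subgroup G, M₁ ≠ M₂ ∧ M₁ ≠ M₃ ∧ M₂ ≠ M₃ ∧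
      comaxAdj M₁ M₂ ∧ comaxAdj M₁ M₃ ∧ comaxAdj M₂ M₃ := by
  have : Nontrivial G := by
    by_contra hn
    rw [not_nontrivial_iff_subsingleton] at hn
    exact h (isCyclic_of_subsingleton)
  obtain ⟨x, hx1⟩ := exists_ne (1 : G)
  obtain ⟨M₁, hM₁, hxM₁⟩ := exists_coatom_mem h x
  obtain ⟨y, -, hyM₁⟩ := SetLike.exists_of_lt (Ne.lt_top hM₁.1)
  obtain ⟨M₂, hM₂, hyM₂⟩ := exists_coatom_mem h y
  have h12 : M₁ ≠ M₂ := fun hh => hyM₁ (hh ▸ hyM₂)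
  obtain ⟨a, haM₁, haM₂⟩ := SetLike.not_le_iff_exists.mp
    (fun hle : M₁ ≤ M₂ => hM₂.1 (hM₁.2 M₂ (lt_of_le_of_ne hle h12)))
  obtain ⟨M₃, hM₃, hzM₃⟩ := exists_coatom_mem h (a * y)
  have hz1 : a * y ∉ M₁ := fun hz => hyM₁ (by
    have := mul_mem (inv_mem haM₁) hz; rwa [inv_mul_cancel_left] at this)
  have hz2 : a * y ∉ M₂ := fun hz => haM₂ (by
    have := mul_mem hz (inv_mem hyM₂); rwa [mul_inv_cancel_right] at this)
  have h13 : M₁ ≠ M₃ := fun hh => hz1 (hh ▸ hzM₃)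
  have h23 : M₂ ≠ M₃ := fun hh => hz2 (hh ▸ hzM₃)
  have hb₁ : M₁ ≠ ⊥ := fun hh => hx1 (by simpa [hh] using hxM₁)
  have hy1 : y ≠ 1 := fun hh => hyM₁ (hh ▸ M₁.one_mem)
  have hb₂ : M₂ ≠ ⊥ := fun hh => hy1 (by simpa [hh] using hyM₂)
  have hzne : a * y ≠ 1 := fun hh => hyM₁ (by
    have hy : y = a⁻¹ := by
      have := congrArg (fun t => a⁻¹ * t) hh
      simpa [← mul_assoc] using this
    exact hy ▸ inv_mem haM₁)
  have hb₃ : M₃ ≠ ⊥ := fun hh => hzne (by simpa [hh] using hzM₃)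
  exact ⟨M₁, M₂, M₃, h12, h13, h23, coatom_comaxAdj hM₁ hM₂ h12 hb₁ hb₂,
    coatom_comaxAdj hM₁ hM₃ h13 hb₁ hb₃, coatom_comaxAdj hM₂ hM₃ h23 hb₂ hb₃⟩

end Triangle

section Symm
variable {G : Type*} [Group G]

lemma comaxAdj.symm {H K : Subgroup G} (h : comaxAdj H K) : comaxAdj K H := by
  obtain ⟨h1, h2, h3, h4, h5, h6⟩ := h
  refine ⟨h3, h4, h1, h2, h5.symm, ?_⟩
  rw [Set.eq_univ_iff_forall]
  intro x
  have hx : x⁻¹ ∈ (H : Set G) * (K : Set G) := by rw [h6]; trivial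
  obtain ⟨a, ha, b, hb, hab⟩ := hx
  refine ⟨b⁻¹, inv_mem hb, a⁻¹, inv_mem ha, ?_⟩
  have hab' : a * b = x⁻¹ := hab
  show b⁻¹ * a⁻¹ = x
  rw [← mul_inv_rev, hab', inv_inv]

lemma comaxAdj.ne {H K : Subgroup G} (h : comaxAdj H K) : H ≠ K := h.2.2.2.2.1

lemma star_triangle_contra {H : Subgroup G}
    (hno : ∀ K₁ K₂ : Subgroup G, (∃ L, comaxAdj K₁ L) → (∃ L, comaxAdj K₂ L) →
      K₁ ≠ H → K₂ ≠ H → ¬ comaxAdj K₁ K₂)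
    {M₁ M₂ M₃ : Subgroup G} (h12 : comaxAdj M₁ M₂) (h13 : comaxAdj M₁ M₃)
    (h23 : comaxAdj M₂ M₃) : False := by
  by_cases e1 : M₁ = H
  · exact hno M₂ M₃ ⟨M₃, h23⟩ ⟨M₂, h23.symm⟩ (fun h => h12.ne (e1.trans h.symm))
      (fun h => h13.ne (e1.trans h.symm)) h23
  · by_cases e2 : M₂ = H
    · exact hno M₁ M₃ ⟨M₂, h12⟩ ⟨M₁, h13.symm⟩ e1 (fun h => h23.ne (e2.trans h.symm)) h13
    · exact hno M₁ M₂ ⟨M₂, h12⟩ ⟨M₁, h12.symm⟩ e1 e2 h12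

end Symm

section Numeric

lemma pow_dvd_lcm_cases {p r a b : ℕ} (hp : p.Prime) (ha : a ≠ 0) (hb : b ≠ 0)
    (h : p ^ r ∣ Nat.lcm a b) : p ^ r ∣ a ∨ p ^ r ∣ b := by
  have hlcm0 : Nat.lcm a b ≠ 0 := Nat.lcm_ne_zero ha hb
  have h1 : r ≤ (Nat.lcm a b).factorization p :=
    (Nat.Prime.pow_dvd_iff_le_factorization hp hlcm0).mp h
  rw [Nat.factorization_lcm ha hb, Finsupp.sup_apply] at h1
  rcases le_sup_iff.mp h1 with h2 | h2
  · exact Or.inl ((Nat.Prime.pow_dvd_iff_le_factorization hp ha).mpr h2)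
  · exact Or.inr ((Nat.Prime.pow_dvd_iff_le_factorization hp hb).mpr h2)

lemma lcm_div_primes {n p q : ℕ} (hn : n ≠ 0) (hp : p.Prime) (hq : q.Prime)
    (hpq : p ≠ q) (hpn : p ∣ n) (hqn : q ∣ n) : Nat.lcm (n / p) (n / q) = n := by
  have hnp : n / p ∣ n := Nat.div_dvd_of_dvd hpn
  have hnq : n / q ∣ n := Nat.div_dvd_of_dvd hqn
  have hL : Nat.lcm (n / p) (n / q) ∣ n := Nat.lcm_dvd hnp hnq
  obtain ⟨t, ht⟩ := hL
  obtain ⟨u, hu⟩ := Nat.dvd_lcm_left (n / p) (n / q)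
  have hnp0 : 0 < n / p := Nat.div_pos (Nat.le_of_dvd (Nat.pos_of_ne_zero hn) hpn) hp.pos
  have hnq0 : 0 < n / q := Nat.div_pos (Nat.le_of_dvd (Nat.pos_of_ne_zero hn) hqn) hq.pos
  have key : p = u * t := by
    have h1 : (n / p) * p = (n / p) * (u * t) := by
      calc (n / p) * p = n := Nat.div_mul_cancel hpn
        _ = (n / p) * u * t := by rw [← hu]; exact ht
        _ = (n / p) * (u * t) := mul_assoc _ _ _
    exact Nat.eq_of_mul_eq_mul_left hnp0 h1
  have ht_dvd : t ∣ p := ⟨u, by rw [key, mul_comm]⟩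
  rcases hp.eq_one_or_self_of_dvd t ht_dvd with h1 | h1
  · rw [h1, mul_one] at ht; exact ht.symm
  · exfalso
    rw [h1] at ht
    have hLeq : Nat.lcm (n / p) (n / q) = n / p := by
      refine Nat.eq_of_mul_eq_mul_right hp.pos ?_
      rw [Nat.div_mul_cancel hpn, ← ht]
    have hdvd : n / q ∣ n / p := hLeq ▸ Nat.dvd_lcm_right _ _
    obtain ⟨k, hk⟩ := hdvd
    have hq_eq : q = k * p := by
      have h3 : (n / q) * q = (n / q) * (k * p) := by
        calc (n / q) * q = n := Nat.div_mul_cancel hqn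
          _ = (n / p) * p := (Nat.div_mul_cancel hpn).symm
          _ = ((n / q) * k) * p := by rw [← hk]
          _ = (n / q) * (k * p) := by rw [mul_assoc]
      exact Nat.eq_of_mul_eq_mul_left hnq0 h3
    have hpdvdq : p ∣ q := ⟨k, by rw [hq_eq, mul_comm]⟩
    exact hpq ((Nat.prime_dvd_prime_iff_eq hp hq).mp hpdvdq).symm.symm

lemma dvd_pp_mul {p q r k : ℕ} (hp : p.Prime) (hq : q.Prime)
    (hk : k ∣ p ^ r * q) (hqk : ¬ q ∣ k) : ∃ i, i ≤ r ∧ k = p ^ i := by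
  have hco : Nat.Coprime k q := ((Nat.Prime.coprime_iff_not_dvd hq).mpr hqk).symm
  have : k ∣ p ^ r := hco.dvd_of_dvd_mul_right hk
  obtain ⟨i, hi, rfl⟩ := (Nat.dvd_prime_pow hp).mp this
  exact ⟨i, hi, rfl⟩

lemma dvd_pp_mul' {p q r k : ℕ} (hp : p.Prime) (hq : q.Prime)
    (hk : k ∣ p ^ r * q) (hqk : q ∣ k) : ∃ i, i ≤ r ∧ k = p ^ i * q := by
  obtain ⟨m, rfl⟩ := hqk
  have : m ∣ p ^ r := by
    have h2 : q * m ∣ q * p ^ r := by rwa [mul_comm (p ^ r) q] at hk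
    exact (Nat.mul_dvd_mul_iff_left hq.pos).mp h2
  obtain ⟨i, hi, rfl⟩ := (Nat.dvd_prime_pow hp).mp this
  exact ⟨i, hi, mul_comm q _⟩

lemma exists_two_primes {n d e : ℕ} (hn : n ≠ 0) (hd : d ∣ n) (he : e ∣ n) (hd1 : d ≠ 1)
    (hdn : d ≠ n) (hen : e ≠ n) (hlcm : Nat.lcm d e = n) :
    ∃ p q, p.Prime ∧ q.Prime ∧ p ≠ q ∧ p ∣ n ∧ q ∣ n := by
  have hn1 : n ≠ 1 := fun h => hd1 (Nat.eq_one_of_dvd_one (h ▸ hd))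
  by_contra hcon
  push_neg at hcon
  obtain ⟨p, hp, hpn⟩ := Nat.exists_prime_and_dvd hn1
  have huniq : ∀ {s : ℕ}, s.Prime → s ∣ n → s = p := by
    intro s hs hsn
    by_contra hne
    exact (hcon s p hs hp hne hsn) hpn
  have hpow := Nat.eq_prime_pow_of_unique_prime_dvd hn huniq
  set a := n.primeFactorsList.length with ha_def
  have ha : a ≠ 0 := by
    intro h
    rw [h, pow_zero] at hpow
    exact hn1 hpow
  have hdd : d ∣ p ^ (a - 1) := by
    obtain ⟨i, hi, rfl⟩ := (Nat.dvd_prime_pow hp).mp (hpow ▸ hd)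
    have hia : i ≠ a := fun h => hdn (by rw [h, ← hpow])
    exact pow_dvd_pow p (by omega)
  have hee : e ∣ p ^ (a - 1) := by
    obtain ⟨i, hi, rfl⟩ := (Nat.dvd_prime_pow hp).mp (hpow ▸ he)
    have hia : i ≠ a := fun h => hen (by rw [h, ← hpow])
    exact pow_dvd_pow p (by omega)
  have hcontra : n ∣ p ^ (a - 1) := hlcm ▸ Nat.lcm_dvd hdd hee
  rw [hpow] at hcontra
  have := (Nat.pow_dvd_pow_iff_le_right hp.one_lt).mp hcontra
  omega

end Numeric

section StarConstruction
variable {G : Type*} [Group G] [Finite G]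

lemma card_subgroup_ne_zero (K : Subgroup G) : Nat.card K ≠ 0 := Nat.card_pos.ne'

lemma star_of_cyclic_pprq [IsCyclic G] {p q r : ℕ} (hp : p.Prime) (hq : q.Prime)
    (hpq : p ≠ q) (hr : 1 ≤ r) (hcard : Nat.card G = p ^ r * q) :
    ∃ H : Subgroup G, (∃ L, comaxAdj H L) ∧
      (∀ K : Subgroup G, (∃ L, comaxAdj K L) → K ≠ H → comaxAdj H K) ∧
      (∀ K₁ K₂ : Subgroup G, (∃ L, comaxAdj K₁ L) → (∃ L, comaxAdj K₂ L) →
        K₁ ≠ H → K₂ ≠ H → ¬ comaxAdj K₁ K₂) ∧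
      (∃ K : Subgroup G, (∃ L, comaxAdj K L) ∧ K ≠ H) := by
  have hn0 : Nat.card G ≠ 0 := Nat.card_pos.ne'
  have hcopq : Nat.Coprime p q := (Nat.coprime_primes hp hq).mpr hpq
  have hco : Nat.Coprime (p ^ r) q := Nat.Coprime.pow_left r hcopq
  have hppr1 : p ^ r ≠ 1 := Nat.ne_of_gt (Nat.one_lt_pow (by omega) hp.one_lt)
  have hq1 : q ≠ 1 := hq.ne_one
  have hpdvdpr : p ∣ p ^ r := dvd_pow_self p (by omega)
  have hprq : p ^ r ≠ q := by
    intro h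
    exact hpq ((Nat.prime_dvd_prime_iff_eq hp hq).mp (h ▸ hpdvdpr))
  have hprdvd : p ^ r ∣ Nat.card G := hcard ▸ dvd_mul_right _ _
  have hqdvd : q ∣ Nat.card G := hcard ▸ dvd_mul_left _ _
  have hprn : p ^ r ≠ Nat.card G := by
    intro h
    rw [hcard] at h
    have h2 : p ^ r * 1 = p ^ r * q := by rw [mul_one]; exact h
    exact hq1 (Nat.eq_of_mul_eq_mul_left (pow_pos hp.pos r) h2).symm
  have hqn : q ≠ Nat.card G := by
    intro h
    rw [hcard] at h
    have h2 : 1 * q = p ^ r * q := by rw [one_mul]; exact h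
    exact hppr1 (Nat.eq_of_mul_eq_mul_right hq.pos h2).symm
  obtain ⟨H, hHcard, -⟩ := exists_subgroup_card_eq' (G := G) hprdvd
  obtain ⟨L, hLcard, -⟩ := exists_subgroup_card_eq' (G := G) hqdvd
  have adjHL : comaxAdj H L := by
    rw [cyclic_comaxAdj_iff, hHcard, hLcard]
    exact ⟨hppr1, hprn, hq1, hqn, hprq, by rw [hco.lcm_eq_mul, hcard]⟩
  have hLH : L ≠ H := by
    intro h
    apply hprq
    rw [← hHcard, ← hLcard, h]
  -- characterization of non-isolated vertices other than H
  have hchar : ∀ K : Subgroup G, (∃ L', comaxAdj K L') → K ≠ H →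
      ∃ i, i < r ∧ Nat.card K = p ^ i * q := by
    rintro K ⟨L', hKL'⟩ hKH
    rw [cyclic_comaxAdj_iff] at hKL'
    obtain ⟨hk1, hkn, hl1, hln, hkl, hlcm⟩ := hKL'
    have hkdvd : Nat.card K ∣ p ^ r * q := hcard ▸ Subgroup.card_subgroup_dvd_card K
    have hldvd : Nat.card L' ∣ p ^ r * q := hcard ▸ Subgroup.card_subgroup_dvd_card L'
    have hk0 := card_subgroup_ne_zero K
    have hl0 := card_subgroup_ne_zero L'
    by_cases hqk : q ∣ Nat.card K
    · obtain ⟨i, hir, hkeq⟩ := dvd_pp_mul' hp hq hkdvd hqk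
      have hir' : i ≠ r := by
        intro h
        exact hkn (by rw [hkeq, h, ← hcard])
      exact ⟨i, by omega, hkeq⟩
    · exfalso
      obtain ⟨i, hir, hkeq⟩ := dvd_pp_mul hp hq hkdvd hqk
      have hin : i ≠ r := by
        intro h
        exact hKH (cyclic_card_inj (by rw [hkeq, h, hHcard]))
      have hpr : p ^ r ∣ Nat.lcm (Nat.card K) (Nat.card L') := by
        rw [hlcm]; exact hprdvd
      rcases pow_dvd_lcm_cases hp hk0 hl0 hpr with hc | hc
      · rw [hkeq] at hc
        have := (Nat.pow_dvd_pow_iff_le_right hp.one_lt).mp hc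
        omega
      · obtain ⟨m, hm⟩ := hc
        have hmq : m ∣ q := by
          have h2 : p ^ r * m ∣ p ^ r * q := by rw [← hm]; exact hldvd
          exact (Nat.mul_dvd_mul_iff_left (pow_pos hp.pos r)).mp h2
        rcases hq.eq_one_or_self_of_dvd m hmq with h1 | h1
        · rw [h1, mul_one] at hm
          have hqlcm : q ^ 1 ∣ Nat.lcm (Nat.card K) (Nat.card L') := by
            rw [hlcm, pow_one]; exact hqdvd
          rcases pow_dvd_lcm_cases hq hk0 hl0 hqlcm with hcc | hcc
          · rw [pow_one] at hcc; exact hqk hcc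
          · rw [hm, pow_one] at hcc
            exact hpq ((Nat.prime_dvd_prime_iff_eq hq hp).mp (hq.dvd_of_dvd_pow hcc)).symm
        · rw [h1] at hm
          exact hln (by rw [hm, ← hcard])
  refine ⟨H, ⟨L, adjHL⟩, ?_, ?_, ⟨L, ⟨H, adjHL.symm⟩, hLH⟩⟩
  · intro K hKiso hKH
    obtain ⟨i, hir, hkeq⟩ := hchar K hKiso hKH
    obtain ⟨L', hKL'⟩ := hKiso
    have hKfacts := (cyclic_comaxAdj_iff.mp hKL')
    rw [cyclic_comaxAdj_iff, hHcard, hkeq]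
    refine ⟨hppr1, hprn, ?_, ?_, ?_, ?_⟩
    · intro h
      exact hq1 (Nat.eq_one_of_mul_eq_one_left h)
    · rw [hcard]
      intro h
      have h2 : p ^ i = p ^ r := Nat.eq_of_mul_eq_mul_right hq.pos h
      have := Nat.pow_right_injective hp.two_le h2
      omega
    · intro h
      have hqpr : q ∣ p ^ r := h ▸ Dvd.intro_left (p ^ i) rfl
      exact hpq ((Nat.prime_dvd_prime_iff_eq hq hp).mp (hq.dvd_of_dvd_pow hqpr)).symm
    · refine Nat.dvd_antisymm ?_ ?_
      · refine Nat.lcm_dvd hprdvd ?_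
        rw [hcard]
        exact Nat.mul_dvd_mul (pow_dvd_pow p (le_of_lt hir)) dvd_rfl
      · rw [hcard]
        refine hco.mul_dvd_of_dvd_of_dvd (Nat.dvd_lcm_left _ _) ?_
        exact dvd_trans (Dvd.intro_left (p ^ i) rfl) (Nat.dvd_lcm_right _ _)
  · intro K₁ K₂ h1iso h2iso h1H h2H hadj12
    obtain ⟨i, hir, hk1eq⟩ := hchar K₁ h1iso h1H
    obtain ⟨j, hjr, hk2eq⟩ := hchar K₂ h2iso h2H
    rw [cyclic_comaxAdj_iff] at hadj12
    obtain ⟨-, -, -, -, -, hlcm⟩ := hadj12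
    have hpr : p ^ r ∣ Nat.lcm (Nat.card K₁) (Nat.card K₂) := by
      rw [hlcm]; exact hprdvd
    have hprq' : Nat.Coprime (p ^ r) q := hco
    rcases pow_dvd_lcm_cases hp (card_subgroup_ne_zero K₁) (card_subgroup_ne_zero K₂) hpr
      with hc | hc
    · rw [hk1eq] at hc
      have := (Nat.pow_dvd_pow_iff_le_right hp.one_lt).mp (hprq'.dvd_of_dvd_mul_right hc)
      omega
    · rw [hk2eq] at hc
      have := (Nat.pow_dvd_pow_iff_le_right hp.one_lt).mp (hprq'.dvd_of_dvd_mul_right hc)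
      omega

end StarConstruction

section ForwardCyclic
variable {G : Type*} [Group G] [Finite G]

lemma cyclic_star_classify [IsCyclic G] {H : Subgroup G}
    (hedge : ∃ L, comaxAdj H L)
    (hno : ∀ K₁ K₂ : Subgroup G, (∃ L, comaxAdj K₁ L) → (∃ L, comaxAdj K₂ L) →
      K₁ ≠ H → K₂ ≠ H → ¬ comaxAdj K₁ K₂) :
    ((∃ p q : ℕ, p.Prime ∧ q.Prime ∧ p ≠ q ∧ Nat.card G = p * q) ∨
      (IsCyclic G ∧ ∃ p q r : ℕ, p.Prime ∧ q.Prime ∧ p ≠ q ∧ 2 ≤ r ∧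
        Nat.card G = p ^ r * q)) := by
  have hn0 : Nat.card G ≠ 0 := Nat.card_pos.ne'
  obtain ⟨L₀, hHL₀⟩ := hedge
  have h0 := cyclic_comaxAdj_iff.mp hHL₀
  obtain ⟨hH1, hHn, hL1, hLn, hHL, hlcm0⟩ := h0
  obtain ⟨p, q, hp, hq, hpq, hpn, hqn⟩ := exists_two_primes hn0
    (Subgroup.card_subgroup_dvd_card H) (Subgroup.card_subgroup_dvd_card L₀)
    hH1 hHn hLn hlcm0
  -- auxiliary facts about n / t for prime divisors t
  have hdivne : ∀ t : ℕ, t.Prime → t ∣ Nat.card G → Nat.card G / t ≠ Nat.card G := by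
    intro t ht htn h
    have := Nat.div_lt_self (Nat.pos_of_ne_zero hn0) ht.one_lt
    omega
  have hdiv_inj : ∀ t t' : ℕ, t.Prime → t'.Prime → t ∣ Nat.card G → t' ∣ Nat.card G →
      Nat.card G / t = Nat.card G / t' → t = t' := by
    intro t t' ht ht' htn ht'n h
    have h1 : (Nat.card G / t) * t = (Nat.card G / t) * t' := by
      rw [Nat.div_mul_cancel htn, h, Nat.div_mul_cancel ht'n]
    have hpos : 0 < Nat.card G / t :=
      Nat.div_pos (Nat.le_of_dvd (Nat.pos_of_ne_zero hn0) htn) ht.pos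
    exact Nat.eq_of_mul_eq_mul_left hpos h1
  -- there is no third prime divisor
  have honly : ∀ s : ℕ, s.Prime → s ∣ Nat.card G → s = p ∨ s = q := by
    intro s hs hsn
    by_contra hcon
    push_neg at hcon
    obtain ⟨hsp, hsq⟩ := hcon
    have hdiv1 : ∀ t : ℕ, t.Prime → t ∣ Nat.card G → (t = p ∨ t = q → False) →
        Nat.card G / t ≠ 1 := by
      intro t ht htn hor h
      have hnt : Nat.card G = t := by
        have := Nat.div_mul_cancel htn
        rw [h, one_mul] at this
        exact this.symm
      rcases (Nat.prime_dvd_prime_iff_eq hp ht).mp (hnt ▸ hpn) with h1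
      exact hor (Or.inl h1.symm)
    -- n/p ≠ 1 : if n = p then q ∣ p gives q = p
    have hq_ne_p : Nat.card G / p ≠ 1 := by
      intro h
      have hnt : Nat.card G = p := by
        have := Nat.div_mul_cancel hpn
        rw [h, one_mul] at this
        exact this.symm
      exact hpq ((Nat.prime_dvd_prime_iff_eq hq hp).mp (hnt ▸ hqn)).symm
    have hp_ne_1 : Nat.card G / q ≠ 1 := by
      intro h
      have hnt : Nat.card G = q := by
        have := Nat.div_mul_cancel hqn
        rw [h, one_mul] at this
        exact this.symm
      exact hpq ((Nat.prime_dvd_prime_iff_eq hp hq).mp (hnt ▸ hpn))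
    have hs_ne_1 : Nat.card G / s ≠ 1 := by
      intro h
      have hnt : Nat.card G = s := by
        have := Nat.div_mul_cancel hsn
        rw [h, one_mul] at this
        exact this.symm
      exact hsp ((Nat.prime_dvd_prime_iff_eq hp hs).mp (hnt ▸ hpn)).symm
    obtain ⟨A, hA, -⟩ := exists_subgroup_card_eq' (G := G) (Nat.div_dvd_of_dvd hpn)
    obtain ⟨B, hB, -⟩ := exists_subgroup_card_eq' (G := G) (Nat.div_dvd_of_dvd hqn)
    obtain ⟨C, hC, -⟩ := exists_subgroup_card_eq' (G := G) (Nat.div_dvd_of_dvd hsn)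
    have adjAB : comaxAdj A B := by
      rw [cyclic_comaxAdj_iff, hA, hB]
      exact ⟨hq_ne_p, hdivne p hp hpn, hp_ne_1, hdivne q hq hqn,
        fun h => hpq (hdiv_inj p q hp hq hpn hqn h),
        lcm_div_primes hn0 hp hq hpq hpn hqn⟩
    have adjAC : comaxAdj A C := by
      rw [cyclic_comaxAdj_iff, hA, hC]
      exact ⟨hq_ne_p, hdivne p hp hpn, hs_ne_1, hdivne s hs hsn,
        fun h => hsp (hdiv_inj p s hp hs hpn hsn h).symm,
        lcm_div_primes hn0 hp hs (fun h => hsp h.symm) hpn hsn⟩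
    have adjBC : comaxAdj B C := by
      rw [cyclic_comaxAdj_iff, hB, hC]
      exact ⟨hp_ne_1, hdivne q hq hqn, hs_ne_1, hdivne s hs hsn,
        fun h => hsq (hdiv_inj q s hq hs hqn hsn h).symm,
        lcm_div_primes hn0 hq hs (fun h => hsq h.symm) hqn hsn⟩
    exact star_triangle_contra hno adjAB adjAC adjBC
  -- so n = p ^ a * q ^ b
  have hcopq : Nat.Coprime p q := (Nat.coprime_primes hp hq).mpr hpq
  set a := (Nat.card G).factorization p with ha_def
  set b := (Nat.card G).factorization q with hb_def
  have ha1 : 1 ≤ a := hp.factorization_pos_of_dvd hn0 hpn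
  have hb1 : 1 ≤ b := hq.factorization_pos_of_dvd hn0 hqn
  have hpf : (Nat.card G).primeFactors = {p, q} := by
    ext s
    simp only [Nat.mem_primeFactors, Finset.mem_insert, Finset.mem_singleton]
    constructor
    · rintro ⟨hs, hsn, -⟩
      exact honly s hs hsn
    · rintro (rfl | rfl)
      · exact ⟨hp, hpn, hn0⟩
      · exact ⟨hq, hqn, hn0⟩
  have hfact : Nat.card G = p ^ a * q ^ b := by
    have h1 := Nat.factorization_prod_pow_eq_self hn0
    rw [Finsupp.prod] at h1
    rw [Nat.support_factorization, hpf] at h1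
    rw [Finset.prod_pair hpq] at h1
    exact h1.symm
  -- rule out a ≥ 2 and b ≥ 2
  have hnot : ¬ (2 ≤ a ∧ 2 ≤ b) := by
    rintro ⟨ha2, hb2⟩
    have hcoab : Nat.Coprime (p ^ a) (q ^ b) := hcopq.pow a b
    have hd1 : p ^ a ∣ Nat.card G := hfact ▸ dvd_mul_right _ _
    have hd2 : q ^ b ∣ Nat.card G := hfact ▸ dvd_mul_left _ _
    have hd3 : p ^ a * q ^ (b - 1) ∣ Nat.card G :=
      hfact ▸ Nat.mul_dvd_mul dvd_rfl (pow_dvd_pow q (by omega))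
    have hd4 : p ^ (a - 1) * q ^ b ∣ Nat.card G :=
      hfact ▸ Nat.mul_dvd_mul (pow_dvd_pow p (by omega)) dvd_rfl
    obtain ⟨A₁, hA₁, -⟩ := exists_subgroup_card_eq' (G := G) hd1
    obtain ⟨A₂, hA₂, -⟩ := exists_subgroup_card_eq' (G := G) hd2
    obtain ⟨A₃, hA₃, -⟩ := exists_subgroup_card_eq' (G := G) hd3
    obtain ⟨A₄, hA₄, -⟩ := exists_subgroup_card_eq' (G := G) hd4
    have hppos := pow_pos hp.pos
    have hqpos := pow_pos hq.pos
    -- not equal to 1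
    have h1n1 : p ^ a ≠ 1 := Nat.ne_of_gt (Nat.one_lt_pow (by omega) hp.one_lt)
    have h2n1 : q ^ b ≠ 1 := Nat.ne_of_gt (Nat.one_lt_pow (by omega) hq.one_lt)
    have h3n1 : p ^ a * q ^ (b - 1) ≠ 1 := fun h => h1n1 (Nat.eq_one_of_mul_eq_one_right h)
    have h4n1 : q ^ b * 1 ≠ 1 := by simpa using h2n1
    have h4n1' : p ^ (a - 1) * q ^ b ≠ 1 := fun h => h2n1 (Nat.eq_one_of_mul_eq_one_left h)
    -- not equal to n
    have h1nn : p ^ a ≠ Nat.card G := by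
      rw [hfact]
      intro h
      have h2 : p ^ a * 1 = p ^ a * q ^ b := by rw [mul_one]; exact h
      exact h2n1 (Nat.eq_of_mul_eq_mul_left (hppos a) h2).symm
    have h2nn : q ^ b ≠ Nat.card G := by
      rw [hfact]
      intro h
      have h2 : 1 * q ^ b = p ^ a * q ^ b := by rw [one_mul]; exact h
      exact h1n1 (Nat.eq_of_mul_eq_mul_right (hqpos b) h2).symm
    have h3nn : p ^ a * q ^ (b - 1) ≠ Nat.card G := by
      rw [hfact]
      intro h
      have h2 : q ^ (b - 1) = q ^ b := Nat.eq_of_mul_eq_mul_left (hppos a) h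
      have := Nat.pow_right_injective hq.two_le h2
      omega
    have h4nn : p ^ (a - 1) * q ^ b ≠ Nat.card G := by
      rw [hfact]
      intro h
      have h2 : p ^ (a - 1) = p ^ a := Nat.eq_of_mul_eq_mul_right (hqpos b) h
      have := Nat.pow_right_injective hp.two_le h2
      omega
    -- pairwise distinctness of the relevant cards
    have hpq' : ¬ p ∣ q ^ b := fun h =>
      hpq ((Nat.prime_dvd_prime_iff_eq hp hq).mp (hp.dvd_of_dvd_pow h))
    have hqp' : ¬ q ∣ p ^ a := fun h =>
      hpq ((Nat.prime_dvd_prime_iff_eq hq hp).mp (hq.dvd_of_dvd_pow h)).symm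
    have h12 : p ^ a ≠ q ^ b := by
      intro h
      exact hpq' (h ▸ dvd_pow_self p (by omega : a ≠ 0))
    have h14 : p ^ a ≠ p ^ (a - 1) * q ^ b := by
      intro h
      exact hqp' (h ▸ Dvd.dvd.mul_left (dvd_pow_self q (by omega : b ≠ 0)) _)
    have h23 : q ^ b ≠ p ^ a * q ^ (b - 1) := by
      intro h
      exact hpq' (h ▸ Dvd.dvd.mul_right (dvd_pow_self p (by omega : a ≠ 0)) _)
    have h34 : p ^ a * q ^ (b - 1) ≠ p ^ (a - 1) * q ^ b := by
      intro h
      have hdvd : p ^ a ∣ p ^ (a - 1) * q ^ b := h ▸ dvd_mul_right _ _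
      have := (Nat.pow_dvd_pow_iff_le_right hp.one_lt).mp
        ((hcopq.pow a b).dvd_of_dvd_mul_right hdvd)
      omega
    have h13 : p ^ a ≠ p ^ a * q ^ (b - 1) := by
      intro h
      have h2 : p ^ a * 1 = p ^ a * q ^ (b - 1) := by rw [mul_one]; exact h
      have h3 := (Nat.eq_of_mul_eq_mul_left (hppos a) h2).symm
      have := Nat.pow_right_injective hq.two_le (h3.trans (pow_zero q).symm)
      omega
    have h24 : q ^ b ≠ p ^ (a - 1) * q ^ b := by
      intro h
      have h2 : 1 * q ^ b = p ^ (a - 1) * q ^ b := by rw [one_mul]; exact h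
      have h3 := (Nat.eq_of_mul_eq_mul_right (hqpos b) h2).symm
      have := Nat.pow_right_injective hp.two_le (h3.trans (pow_zero p).symm)
      omega
    -- lcm computations
    have hlcm12 : Nat.lcm (p ^ a) (q ^ b) = Nat.card G := by
      rw [hcoab.lcm_eq_mul, hfact]
    have hlcm14 : Nat.lcm (p ^ a) (p ^ (a - 1) * q ^ b) = Nat.card G := by
      refine Nat.dvd_antisymm (Nat.lcm_dvd hd1 hd4) ?_
      rw [hfact]
      exact hcoab.mul_dvd_of_dvd_of_dvd (Nat.dvd_lcm_left _ _)
        (dvd_trans (Dvd.dvd.mul_left dvd_rfl _) (Nat.dvd_lcm_right _ _))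
    have hlcm23 : Nat.lcm (q ^ b) (p ^ a * q ^ (b - 1)) = Nat.card G := by
      refine Nat.dvd_antisymm (Nat.lcm_dvd hd2 hd3) ?_
      rw [hfact]
      exact hcoab.mul_dvd_of_dvd_of_dvd
        (dvd_trans (Dvd.dvd.mul_right dvd_rfl _) (Nat.dvd_lcm_right _ _))
        (Nat.dvd_lcm_left _ _)
    have hlcm34 : Nat.lcm (p ^ a * q ^ (b - 1)) (p ^ (a - 1) * q ^ b) = Nat.card G := by
      refine Nat.dvd_antisymm (Nat.lcm_dvd hd3 hd4) ?_
      rw [hfact]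
      exact hcoab.mul_dvd_of_dvd_of_dvd
        (dvd_trans (Dvd.dvd.mul_right dvd_rfl _) (Nat.dvd_lcm_left _ _))
        (dvd_trans (Dvd.dvd.mul_left dvd_rfl _) (Nat.dvd_lcm_right _ _))
    have adj12 : comaxAdj A₁ A₂ := by
      rw [cyclic_comaxAdj_iff, hA₁, hA₂]
      exact ⟨h1n1, h1nn, h2n1, h2nn, h12, hlcm12⟩
    have adj14 : comaxAdj A₁ A₄ := by
      rw [cyclic_comaxAdj_iff, hA₁, hA₄]
      exact ⟨h1n1, h1nn, h4n1', h4nn, h14, hlcm14⟩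
    have adj23 : comaxAdj A₂ A₃ := by
      rw [cyclic_comaxAdj_iff, hA₂, hA₃]
      exact ⟨h2n1, h2nn, h3n1, h3nn, h23, hlcm23⟩
    have adj34 : comaxAdj A₃ A₄ := by
      rw [cyclic_comaxAdj_iff, hA₃, hA₄]
      exact ⟨h3n1, h3nn, h4n1', h4nn, h34, hlcm34⟩
    -- derive a contradiction with the star property
    by_cases e1 : A₁ = H
    · -- use edge A₂ - A₃
      refine hno A₂ A₃ ⟨A₃, adj23⟩ ⟨A₂, adj23.symm⟩ ?_ ?_ adj23
      · intro h
        apply h12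
        rw [← hA₁, ← hA₂, h, e1]
      · intro h
        have h31 : A₃ = A₁ := h.trans e1.symm
        have hcc := congrArg (fun X : Subgroup G => Nat.card X) h31
        simp only [hA₃, hA₁] at hcc
        exact h13 hcc.symm
    · by_cases e2 : A₂ = H
      · -- use edge A₁ - A₄
        refine hno A₁ A₄ ⟨A₂, adj12⟩ ⟨A₁, adj14.symm⟩ e1 ?_ adj14
        intro h
        have h42 : A₄ = A₂ := h.trans e2.symm
        have hcc := congrArg (fun X : Subgroup G => Nat.card X) h42
        simp only [hA₄, hA₂] at hcc
        exact h24 hcc.symm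
      · exact hno A₁ A₂ ⟨A₂, adj12⟩ ⟨A₁, adj12.symm⟩ e1 e2 adj12
  -- conclude
  rcases Nat.lt_or_ge a 2 with ha2 | ha2
  · have ha : a = 1 := by omega
    rcases Nat.lt_or_ge b 2 with hb2 | hb2
    · have hb : b = 1 := by omega
      left
      exact ⟨p, q, hp, hq, hpq, by rw [hfact, ha, hb, pow_one, pow_one]⟩
    · right
      refine ⟨inferInstance, q, p, b, hq, hp, hpq.symm, hb2, ?_⟩
      rw [hfact, ha, pow_one, mul_comm]
  · have hb : b = 1 := by
      rcases Nat.lt_or_ge b 2 with hb2 | hb2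
      · omega
      · exact absurd ⟨ha2, hb2⟩ hnot
    right
    refine ⟨inferInstance, p, q, a, hp, hq, hpq, ha2, ?_⟩
    rw [hfact, hb, pow_one]

end ForwardCyclic

section PQ

lemma isCyclic_of_nilpotent_card_pq {G : Type*} [Group G] [Finite G] [Group.IsNilpotent G]
    {p q : ℕ} (hp : p.Prime) (hq : q.Prime) (hpq : p ≠ q) (hcard : Nat.card G = p * q) :
    IsCyclic G := by
  haveI hpf : Fact p.Prime := ⟨hp⟩
  haveI hqf : Fact q.Prime := ⟨hq⟩
  have hcopq : Nat.Coprime p q := (Nat.coprime_primes hp hq).mpr hpq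
  obtain ⟨x, hx⟩ := exists_prime_orderOf_dvd_card' p (hcard ▸ dvd_mul_right p q)
  obtain ⟨y, hy⟩ := exists_prime_orderOf_dvd_card' q (hcard ▸ dvd_mul_left q p)
  have hnc : NormalizerCondition G := normalizerCondition_of_isNilpotent
  have hpgx : IsPGroup p (Subgroup.zpowers x) :=
    IsPGroup.of_card (by rw [Nat.card_zpowers, hx, pow_one])
  have hpgy : IsPGroup q (Subgroup.zpowers y) :=
    IsPGroup.of_card (by rw [Nat.card_zpowers, hy, pow_one])
  obtain ⟨P, hPle⟩ := hpgx.exists_le_sylow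
  obtain ⟨Q, hQle⟩ := hpgy.exists_le_sylow
  have hPn : (P : Subgroup G).Normal := Sylow.normal_of_normalizerCondition hnc P
  have hQn : (Q : Subgroup G).Normal := Sylow.normal_of_normalizerCondition hnc Q
  have hdisj : Disjoint (P : Subgroup G) (Q : Subgroup G) := by
    obtain ⟨m, hm⟩ := IsPGroup.iff_card.mp P.isPGroup'
    obtain ⟨l, hl⟩ := IsPGroup.iff_card.mp Q.isPGroup'
    rw [disjoint_iff, ← Subgroup.card_eq_one]
    have h1 : Nat.card ↥((P : Subgroup G) ⊓ (Q : Subgroup G)) ∣ p ^ m :=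
      hm ▸ Subgroup.card_dvd_of_le inf_le_left
    have h2 : Nat.card ↥((P : Subgroup G) ⊓ (Q : Subgroup G)) ∣ q ^ l :=
      hl ▸ Subgroup.card_dvd_of_le inf_le_right
    exact Nat.dvd_one.mp ((hcopq.pow m l) ▸ Nat.dvd_gcd h1 h2)
  have hcomm : Commute x y := Subgroup.commute_of_normal_of_disjoint _ _ hPn hQn hdisj x y
    (hPle (Subgroup.mem_zpowers x)) (hQle (Subgroup.mem_zpowers y))
  have horder : orderOf (x * y) = p * q := by
    rw [hcomm.orderOf_mul_eq_mul_orderOf_of_coprime (by rw [hx, hy]; exact hcopq), hx, hy]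
  exact isCyclic_iff_exists_orderOf_eq_natCard.mpr ⟨x * y, by rw [horder, hcard]⟩

end PQ

/-- For a finite nilpotent group `G`, the deleted co-maximal subgroup graph
`Γ*(G)` is a star iff `|G| = pq` for distinct primes, or `G` is cyclic of order
`p^r q` with `r ≥ 2` and `p ≠ q` primes. -/
theorem deleted_comaximal_star_iff {G : Type*} [Group G] [Finite G]
    [Group.IsNilpotent G] :
    (∃ H : Subgroup G, (∃ L, comaxAdj H L) ∧
      (∀ K : Subgroup G, (∃ L, comaxAdj K L) → K ≠ H → comaxAdj H K) ∧
      (∀ K₁ K₂ : Subgroup G, (∃ L, comaxAdj K₁ L) → (∃ L, comaxAdj K₂ L) →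
        K₁ ≠ H → K₂ ≠ H → ¬ comaxAdj K₁ K₂) ∧
      (∃ K : Subgroup G, (∃ L, comaxAdj K L) ∧ K ≠ H)) ↔
    ((∃ p q : ℕ, p.Prime ∧ q.Prime ∧ p ≠ q ∧ Nat.card G = p * q) ∨
      (IsCyclic G ∧ ∃ p q r : ℕ, p.Prime ∧ q.Prime ∧ p ≠ q ∧ 2 ≤ r ∧
        Nat.card G = p ^ r * q)) := by
  constructor
  · rintro ⟨H, hedge, hadj, hno, -⟩
    by_cases hcyc : IsCyclic G
    · exact cyclic_star_classify hedge hno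
    · obtain ⟨M₁, M₂, M₃, -, -, -, h12, h13, h23⟩ := noncyclic_triangle hcyc
      exact (star_triangle_contra hno h12 h13 h23).elim
  · rintro (⟨p, q, hp, hq, hpq, hcard⟩ | ⟨hcyc, p, q, r, hp, hq, hpq, hr, hcard⟩)
    · haveI := isCyclic_of_nilpotent_card_pq hp hq hpq hcard
      exact star_of_cyclic_pprq hp hq hpq le_rfl (by rw [hcard, pow_one])
    · haveI := hcyc
      exact star_of_cyclic_pprq hp hq hpq (by omega) hcard
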